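/- Let X₁, X₂, ... be i.i.d. real random variables with E[X₁] < 0 and finite second moment. Then the first passage time λ∞ = inf{n ≥ 1 : X₁ + ... + Xₙ < 0} has finite expectation: E[λ∞] < ∞. -/

import Mathlib

open MeasureTheory ProbabilityTheory Filter

/-- Deterministic core inequality for the Wald-type argument. -/
lemma fp_aux_pointwise (x : ℕ → ℝ) (M : ℝ) (n : ℕ) (hn : 1 ≤ n) (c : ℕ → ℝ)
    (hc1 : ∀ k, (∀ m, 1 ≤ m → m ≤ k → 0 ≤ ∑ i ∈ Finset.range m, x i) → c k = 1)
    (hc0 : ∀ k, ¬(∀ m, 1 ≤ m → m ≤ k → 0 ≤ ∑ i ∈ Finset.range m, x i) → c k = 0) :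
    -(M + ∑ k ∈ Finset.range n, max (max (-(x k)) 0 - M) 0 * c k)
      ≤ ∑ k ∈ Finset.range n, x k * c k := by
  classical
  set s : ℕ → ℝ := fun m => ∑ i ∈ Finset.range m, x i with hs
  set Q : ℕ → Prop := fun k => ∀ m, 1 ≤ m → m ≤ k → 0 ≤ s m with hQ
  have hQanti : ∀ j k, j ≤ k → Q k → Q j := fun j k hjk hk m h1 h2 => hk m h1 (h2.trans hjk)
  have hcnn : ∀ k, 0 ≤ c k := by
    intro k
    by_cases h : Q k
    · rw [hc1 k h]; norm_num
    · rw [hc0 k h]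
  have main : ∀ N, 1 ≤ N → N ≤ n → Q (N - 1) →
      (∑ k ∈ Finset.range n, x k * c k = s N) →
      -(M + ∑ k ∈ Finset.range n, max (max (-(x k)) 0 - M) 0 * c k)
        ≤ ∑ k ∈ Finset.range n, x k * c k := by
    intro N h1 h2 hQN hsum
    have hsN : s N = s (N - 1) + x (N - 1) := by
      conv_lhs => rw [show N = (N - 1) + 1 by omega]
      exact Finset.sum_range_succ x (N - 1)
    have hsprev : 0 ≤ s (N - 1) := by
      rcases Nat.eq_zero_or_pos (N - 1) with h | h
      · simp [hs, h]
      · exact hQN (N - 1) h le_rfl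
    have hterm : max (max (-(x (N - 1))) 0 - M) 0 * c (N - 1)
        = max (max (-(x (N - 1))) 0 - M) 0 := by
      rw [hc1 _ hQN, mul_one]
    have hmem : N - 1 ∈ Finset.range n := Finset.mem_range.mpr (by omega)
    have hsingle : max (max (-(x (N - 1))) 0 - M) 0
        ≤ ∑ k ∈ Finset.range n, max (max (-(x k)) 0 - M) 0 * c k := by
      rw [← hterm]
      exact Finset.single_le_sum (f := fun k => max (max (-(x k)) 0 - M) 0 * c k)
        (fun k _ => mul_nonneg (le_max_right _ _) (hcnn k)) hmem
    have hx : -(x (N - 1)) - M ≤ max (max (-(x (N - 1))) 0 - M) 0 :=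
      le_max_of_le_left (sub_le_sub_right (le_max_left _ _) M)
    rw [hsum, hsN]
    linarith
  by_cases hall : ∀ k, k < n → Q k
  · refine main n hn le_rfl (hall (n - 1) (by omega)) ?_
    have : ∀ k ∈ Finset.range n, x k * c k = x k := by
      intro k hk
      rw [hc1 k (hall k (Finset.mem_range.mp hk)), mul_one]
    rw [Finset.sum_congr rfl this]
  · push_neg at hall
    obtain ⟨kw, hkw, hQkw⟩ := hall
    have hne : {k | ¬ Q k}.Nonempty := ⟨kw, hQkw⟩
    set N := sInf {k | ¬ Q k} with hN
    have hNmem : ¬ Q N := Nat.sInf_mem hne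
    have hQ0 : Q 0 := fun m h1 h2 => absurd (h1.trans h2) (by norm_num)
    have hN1 : 1 ≤ N := by
      rcases Nat.eq_zero_or_pos N with h | h
      · rw [h] at hNmem; exact absurd hQ0 hNmem
      · exact h
    have hNle : N ≤ kw := Nat.sInf_le hQkw
    have hQN : Q (N - 1) := by
      by_contra h
      have h2 : N ≤ N - 1 := Nat.sInf_le h
      omega
    refine main N hN1 (by omega) hQN ?_
    have hzero : ∀ k ∈ Finset.range n, k ∉ Finset.range N → x k * c k = 0 := by
      intro k _ hk
      have hNk : N ≤ k := by
        by_contra h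
        exact hk (Finset.mem_range.mpr (by omega))
      have : ¬ Q k := fun hq => hNmem (hQanti N k hNk hq)
      rw [hc0 k this, mul_zero]
    rw [← Finset.sum_subset (Finset.range_subset_range.mpr (by omega : N ≤ n)) hzero]
    refine Finset.sum_congr rfl fun k hk => ?_
    have hkN : k < N := Finset.mem_range.mp hk
    have : Q k := by
      by_contra h
      have h2 : N ≤ k := Nat.sInf_le h
      omega
    rw [hc1 k this, mul_one]


/-- Negative-drift random walk with finite second moment: the first passage time below
zero has finite expectation. -/
theorem first_passage_integrable {Ω : Type*} [MeasurableSpace Ω] (μ : Measure Ω)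
    [IsProbabilityMeasure μ] (X : ℕ → Ω → ℝ) (hmeas : ∀ i, Measurable (X i))
    (hindep : iIndepFun X μ)
    (hident : ∀ i, IdentDistrib (X i) (X 0) μ μ)
    (hint : Integrable (X 0) μ) (hmean : ∫ ω, X 0 ω ∂μ < 0)
    (hmom2 : Integrable (fun ω => (X 0 ω) ^ 2) μ)
    (T : Ω → ℕ)
    (hTdef : ∀ ω, T ω = sInf {n : ℕ | 1 ≤ n ∧ ∑ i ∈ Finset.range n, X i ω < 0}) :
    Integrable (fun ω => (T ω : ℝ)) μ := by
  classical
  set A : ℕ → Set Ω := fun k => {ω | ∀ m, 1 ≤ m → m ≤ k → 0 ≤ ∑ i ∈ Finset.range m, X i ω}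
    with hAdef
  have hSmeas0 : ∀ m : ℕ, Measurable fun ω => ∑ i ∈ Finset.range m, X i ω :=
    fun m => Finset.measurable_sum _ fun i _ => hmeas i
  have hA : ∀ k, MeasurableSet (A k) := by
    intro k
    have h1 : A k = ⋂ m ∈ Finset.Icc 1 k, {ω | 0 ≤ ∑ i ∈ Finset.range m, X i ω} := by
      ext ω
      simp only [hAdef, Set.mem_setOf_eq, Set.mem_iInter, Finset.mem_Icc, and_imp]
    rw [h1]
    exact MeasurableSet.biInter (Finset.Icc 1 k).countable_toSet
      fun m _ => measurableSet_le measurable_const (hSmeas0 m)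
  have hmemA : ∀ ω k, k < T ω → ω ∈ A k := by
    intro ω k hk m h1 h2
    have hm : m < T ω := lt_of_le_of_lt h2 hk
    rw [hTdef ω] at hm
    have h3 := Nat.notMem_of_lt_sInf hm
    simp only [Set.mem_setOf_eq, not_and, not_lt] at h3
    exact h3 h1
  have hkey : ∀ (k : ℕ) (g : ℝ → ℝ), Measurable g → Integrable (fun ω => g (X 0 ω)) μ →
      Integrable (fun ω => g (X k ω) * (A k).indicator (fun _ => (1:ℝ)) ω) μ ∧
      ∫ ω, g (X k ω) * (A k).indicator (fun _ => (1:ℝ)) ω ∂μ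
        = (∫ ω, g (X 0 ω) ∂μ) * (μ (A k)).toReal := by
    intro k g hg hgint
    set C : Set (↥(Finset.range k) → ℝ) :=
      {v | ∀ m, 1 ≤ m → m ≤ k →
        0 ≤ ∑ i ∈ Finset.filter (fun i => i.1 < m) (Finset.range k).attach, v i} with hCdef
    have hCmeas : MeasurableSet C := by
      have h1 : C = ⋂ m ∈ Finset.Icc 1 k,
          {v : ↥(Finset.range k) → ℝ |
            0 ≤ ∑ i ∈ Finset.filter (fun i => i.1 < m) (Finset.range k).attach, v i} := by
        ext v
        simp only [hCdef, Set.mem_setOf_eq, Set.mem_iInter, Finset.mem_Icc, and_imp]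
      rw [h1]
      exact MeasurableSet.biInter (Finset.Icc 1 k).countable_toSet fun m _ =>
        measurableSet_le measurable_const (Finset.measurable_sum _ fun i _ => measurable_pi_apply i)
    have hsum_eq : ∀ (ω : Ω) (m : ℕ), m ≤ k →
        (∑ i ∈ Finset.filter (fun i => i.1 < m) (Finset.range k).attach, X i.1 ω)
          = ∑ i ∈ Finset.range m, X i ω := by
      intro ω m hm
      have hfil : Finset.filter (fun i => i < m) (Finset.range k) = Finset.range m := by
        ext i
        simp only [Finset.mem_filter, Finset.mem_range]
        omega
      rw [Finset.sum_filter, Finset.sum_attach (Finset.range k)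
        (fun i => if i < m then X i ω else 0), ← Finset.sum_filter, hfil]
    have hmemiff : ∀ ω : Ω, ((fun i : ↥(Finset.range k) => X i.1 ω) ∈ C) ↔ ω ∈ A k := by
      intro ω
      simp only [hCdef, hAdef, Set.mem_setOf_eq]
      constructor
      · intro h m h1 h2
        have := h m h1 h2
        rwa [hsum_eq ω m h2] at this
      · intro h m h1 h2
        rw [hsum_eq ω m h2]
        exact h m h1 h2
    have hbase := hindep.indepFun_finset {k} (Finset.range k)
      (by simp [Finset.disjoint_singleton_left]) hmeas
    have hφmeas : Measurable fun v : (({k} : Finset ℕ) → ℝ) =>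
        g (v ⟨k, Finset.mem_singleton_self k⟩) := hg.comp (measurable_pi_apply _)
    have hψmeas : Measurable (C.indicator (fun _ => (1:ℝ))) :=
      measurable_const.indicator hCmeas
    have hcomp := hbase.comp hφmeas hψmeas
    have heq2 : (C.indicator (fun _ => (1:ℝ))) ∘ (fun a (i : ↥(Finset.range k)) => X i a)
        = (A k).indicator (fun _ => (1:ℝ)) := by
      funext ω
      by_cases h : ω ∈ A k
      · rw [Function.comp_apply, Set.indicator_of_mem ((hmemiff ω).mpr h),
          Set.indicator_of_mem h]
      · rw [Function.comp_apply, Set.indicator_of_notMem (fun hc => h ((hmemiff ω).mp hc)),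
          Set.indicator_of_notMem h]
    rw [heq2] at hcomp
    have hcomp' : IndepFun (fun ω => g (X k ω)) ((A k).indicator (fun _ => (1:ℝ))) μ := hcomp
    have hid : IdentDistrib (fun ω => g (X k ω)) (fun ω => g (X 0 ω)) μ μ := (hident k).comp hg
    have hgk : Integrable (fun ω => g (X k ω)) μ := hid.integrable_iff.mpr hgint
    have hindint : Integrable ((A k).indicator fun _ => (1:ℝ)) μ :=
      (integrable_const (1:ℝ)).indicator (hA k)
    have hprod_eq : (fun ω => g (X k ω) * (A k).indicator (fun _ => (1:ℝ)) ω)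
        = (A k).indicator (fun ω => g (X k ω)) := by
      funext ω
      by_cases h : ω ∈ A k <;> simp [h]
    constructor
    · rw [hprod_eq]
      exact hgk.indicator (hA k)
    · have hmul := IndepFun.integral_mul_eq_mul_integral hcomp' hgk.1 hindint.1
      have hind_int : ∫ ω, (A k).indicator (fun _ => (1:ℝ)) ω ∂μ = (μ (A k)).toReal := by
        rw [integral_indicator_const (1:ℝ) (hA k), smul_eq_mul, mul_one, Measure.real]
      calc ∫ ω, g (X k ω) * (A k).indicator (fun _ => (1:ℝ)) ω ∂μ
          = ∫ ω, ((fun ω => g (X k ω)) * ((A k).indicator fun _ => (1:ℝ))) ω ∂μ := rfl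
        _ = (∫ ω, g (X k ω) ∂μ) * ∫ ω, (A k).indicator (fun _ => (1:ℝ)) ω ∂μ := hmul
        _ = (∫ ω, g (X 0 ω) ∂μ) * (μ (A k)).toReal := by rw [hid.integral_eq, hind_int]
  obtain ⟨M, hM⟩ : ∃ M : ℕ, ∫ ω, max (max (-(X 0 ω)) 0 - (M:ℝ)) 0 ∂μ
      < -(∫ ω, X 0 ω ∂μ)/2 := by
    have hbound : Integrable (fun ω => max (-(X 0 ω)) 0) μ := by
      have := hint.neg.pos_part
      simpa using this
    have htend' : Tendsto (fun M : ℕ => ∫ ω, max (max (-(X 0 ω)) 0 - (M:ℝ)) 0 ∂μ)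
        atTop (nhds (∫ ω, (0:ℝ) ∂μ)) := by
      apply tendsto_integral_of_dominated_convergence (fun ω => max (-(X 0 ω)) 0)
      · intro M
        exact ((((hmeas 0).neg.max measurable_const).sub measurable_const).max
          measurable_const).aestronglyMeasurable
      · exact hbound
      · intro M
        filter_upwards with ω
        rw [Real.norm_eq_abs, abs_of_nonneg (le_max_right _ _)]
        exact max_le (le_trans (sub_le_self _ (Nat.cast_nonneg M)) le_rfl) (le_max_right _ _)
      · filter_upwards with ω
        apply tendsto_nhds_of_eventually_eq
        filter_upwards [eventually_ge_atTop (Nat.ceil (max (-(X 0 ω)) 0))] with M hM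
        have : max (-(X 0 ω)) 0 - (M:ℝ) ≤ 0 := by
          have := Nat.ceil_le.mp hM
          linarith [this]
        exact max_eq_right this
    have htend : Tendsto (fun M : ℕ => ∫ ω, max (max (-(X 0 ω)) 0 - (M:ℝ)) 0 ∂μ)
        atTop (nhds 0) := by simpa using htend'
    have hpos : (0:ℝ) < -(∫ ω, X 0 ω ∂μ)/2 := by linarith
    have := htend.eventually_lt_const hpos
    exact this.exists
  set μ₀ : ℝ := ∫ ω, X 0 ω ∂μ with hμ₀def
  set g₀ : ℝ → ℝ := fun x => max (max (-x) 0 - (M:ℝ)) 0 with hg₀def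
  have hg₀meas : Measurable g₀ :=
    ((measurable_neg.max measurable_const).sub measurable_const).max measurable_const
  have hbound : Integrable (fun ω => max (-(X 0 ω)) 0) μ := by
    have := hint.neg.pos_part
    simpa using this
  have hg₀int : Integrable (fun ω => g₀ (X 0 ω)) μ := by
    refine hbound.mono (hg₀meas.comp (hmeas 0)).aestronglyMeasurable ?_
    filter_upwards with ω
    rw [Real.norm_eq_abs, Real.norm_eq_abs, abs_of_nonneg (le_max_right _ _),
      abs_of_nonneg (le_max_right _ _)]
    exact max_le (le_trans (sub_le_self _ (Nat.cast_nonneg M)) le_rfl) (le_max_right _ _)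
  set ε : ℝ := ∫ ω, g₀ (X 0 ω) ∂μ with hεdef
  have hε : ε < -μ₀/2 := hM
  have hε0 : 0 ≤ ε := integral_nonneg fun ω => le_max_right _ _
  set q : ℕ → ℝ := fun k => (μ (A k)).toReal with hqdef
  have hq0 : ∀ k, 0 ≤ q k := fun k => ENNReal.toReal_nonneg
  set Cb : ℝ := 2 * (M:ℝ) / (-μ₀) with hCbdef
  have hμ₀neg : (0:ℝ) < -μ₀ := by linarith
  have hkey1 : ∀ k, Integrable (fun ω => X k ω * (A k).indicator (fun _ => (1:ℝ)) ω) μ :=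
    fun k => by simpa using (hkey k id measurable_id (by simpa using hint)).1
  have hkey2 : ∀ k, ∫ ω, X k ω * (A k).indicator (fun _ => (1:ℝ)) ω ∂μ = μ₀ * q k :=
    fun k => by simpa using (hkey k id measurable_id (by simpa using hint)).2
  -- main bound
  have hQbound : ∀ n : ℕ, ∑ k ∈ Finset.range n, q k ≤ Cb := by
    intro n
    rcases Nat.eq_zero_or_pos n with hn | hn
    · rw [hn]
      simp only [Finset.range_zero, Finset.sum_empty]
      positivity
    · have hineq : ∀ ω, -((M:ℝ) + ∑ k ∈ Finset.range n,
          g₀ (X k ω) * (A k).indicator (fun _ => (1:ℝ)) ω)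
          ≤ ∑ k ∈ Finset.range n, X k ω * (A k).indicator (fun _ => (1:ℝ)) ω := by
        intro ω
        refine fp_aux_pointwise (fun i => X i ω) (M:ℝ) n hn
          (fun k => (A k).indicator (fun _ => (1:ℝ)) ω) ?_ ?_
        · intro k hk
          exact Set.indicator_of_mem (by rw [hAdef]; exact hk) _
        · intro k hk
          exact Set.indicator_of_notMem (by rw [hAdef]; exact hk) _
      have hintR : Integrable
          (fun ω => ∑ k ∈ Finset.range n, X k ω * (A k).indicator (fun _ => (1:ℝ)) ω) μ :=
        integrable_finset_sum _ fun k _ => hkey1 k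
      have hintL : Integrable (fun ω => -((M:ℝ) + ∑ k ∈ Finset.range n,
          g₀ (X k ω) * (A k).indicator (fun _ => (1:ℝ)) ω)) μ :=
        ((integrable_const _).add
          (integrable_finset_sum _ fun k _ => (hkey k g₀ hg₀meas hg₀int).1)).neg
      have hle := integral_mono hintL hintR hineq
      have hR : ∫ ω, ∑ k ∈ Finset.range n, X k ω * (A k).indicator (fun _ => (1:ℝ)) ω ∂μ
          = μ₀ * ∑ k ∈ Finset.range n, q k := by
        rw [integral_finset_sum _ fun k _ => hkey1 k, Finset.mul_sum]
        exact Finset.sum_congr rfl fun k _ => hkey2 k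
      have hL : ∫ ω, -((M:ℝ) + ∑ k ∈ Finset.range n,
          g₀ (X k ω) * (A k).indicator (fun _ => (1:ℝ)) ω) ∂μ
          = -((M:ℝ) + ε * ∑ k ∈ Finset.range n, q k) := by
        rw [integral_neg, integral_add (integrable_const _)
          (integrable_finset_sum _ fun k _ => (hkey k g₀ hg₀meas hg₀int).1),
          integral_const, integral_finset_sum _ fun k _ => (hkey k g₀ hg₀meas hg₀int).1]
        have : ∑ k ∈ Finset.range n, (∫ ω, g₀ (X k ω) * (A k).indicator (fun _ => (1:ℝ)) ω ∂μ)
            = ε * ∑ k ∈ Finset.range n, q k := by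
          rw [Finset.mul_sum]
          exact Finset.sum_congr rfl fun k _ => (hkey k g₀ hg₀meas hg₀int).2
        rw [this]
        simp
      rw [hL, hR] at hle
      set Qn : ℝ := ∑ k ∈ Finset.range n, q k with hQndef
      have hQn0 : 0 ≤ Qn := Finset.sum_nonneg fun k _ => hq0 k
      rw [hCbdef, le_div_iff₀ hμ₀neg]
      nlinarith
  -- tsum bound
  have htsum : ∑' k, μ (A k) ≤ ENNReal.ofReal Cb := by
    rw [ENNReal.tsum_eq_iSup_sum]
    refine iSup_le fun s => ?_
    have hsub : s ⊆ Finset.range (s.sup id + 1) := fun k hk =>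
      Finset.mem_range.mpr (Nat.lt_succ_of_le (Finset.le_sup (f := id) hk))
    calc ∑ k ∈ s, μ (A k) ≤ ∑ k ∈ Finset.range (s.sup id + 1), μ (A k) :=
          Finset.sum_le_sum_of_subset hsub
      _ = ENNReal.ofReal (∑ k ∈ Finset.range (s.sup id + 1), q k) := by
          rw [ENNReal.ofReal_sum_of_nonneg fun k _ => hq0 k]
          exact Finset.sum_congr rfl fun k _ =>
            (ENNReal.ofReal_toReal (measure_ne_top μ _)).symm
      _ ≤ ENNReal.ofReal Cb := ENNReal.ofReal_le_ofReal (hQbound _)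
  -- measurability of T
  have hSmeas : ∀ m : ℕ, Measurable fun ω => ∑ i ∈ Finset.range m, X i ω :=
    fun m => Finset.measurable_sum _ fun i _ => hmeas i
  have hTmeas : Measurable T := by
    apply measurable_to_countable'
    intro t
    match t with
    | 0 =>
      have hset : T ⁻¹' {0} = ⋂ (n : ℕ), ⋂ (_ : 1 ≤ n), {ω | 0 ≤ ∑ i ∈ Finset.range n, X i ω} := by
        ext ω
        simp only [Set.mem_preimage, Set.mem_singleton_iff, Set.mem_iInter, Set.mem_setOf_eq]
        constructor
        · intro h n hn
          by_contra hneg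
          push_neg at hneg
          have hne : {n : ℕ | 1 ≤ n ∧ ∑ i ∈ Finset.range n, X i ω < 0}.Nonempty :=
            ⟨n, hn, hneg⟩
          have hmem := Nat.sInf_mem hne
          rw [← hTdef ω, h] at hmem
          exact absurd hmem.1 (by norm_num)
        · intro h
          rw [hTdef ω]
          have hempty : {n : ℕ | 1 ≤ n ∧ ∑ i ∈ Finset.range n, X i ω < 0} = ∅ := by
            ext n
            simp only [Set.mem_setOf_eq, Set.mem_empty_iff_false, iff_false, not_and, not_lt]
            exact h n
          rw [hempty, Nat.sInf_empty]
      rw [hset]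
      exact MeasurableSet.iInter fun n => MeasurableSet.iInter fun _ =>
        measurableSet_le measurable_const (hSmeas n)
    | (t+1) =>
      have hset : T ⁻¹' {t+1} = {ω | ∑ i ∈ Finset.range (t+1), X i ω < 0} ∩ A t := by
        ext ω
        simp only [Set.mem_preimage, Set.mem_singleton_iff, Set.mem_inter_iff, Set.mem_setOf_eq]
        constructor
        · intro h
          have hAt : ω ∈ A t := hmemA ω t (by omega)
          refine ⟨?_, hAt⟩
          have hne : {n : ℕ | 1 ≤ n ∧ ∑ i ∈ Finset.range n, X i ω < 0}.Nonempty := by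
            by_contra he
            rw [Set.not_nonempty_iff_eq_empty] at he
            rw [hTdef ω, he, Nat.sInf_empty] at h
            omega
          have hmem := Nat.sInf_mem hne
          rw [← hTdef ω, h] at hmem
          exact hmem.2
        · rintro ⟨hS, hAt⟩
          rw [hAdef] at hAt
          have hmem : (t+1) ∈ {n : ℕ | 1 ≤ n ∧ ∑ i ∈ Finset.range n, X i ω < 0} :=
            ⟨by omega, hS⟩
          have hlb : ∀ m ∈ {n : ℕ | 1 ≤ n ∧ ∑ i ∈ Finset.range n, X i ω < 0}, t+1 ≤ m := by
            intro m hm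
            by_contra hc
            have h1 : 1 ≤ m := hm.1
            have h2 : m ≤ t := by omega
            exact absurd (hAt m h1 h2) (not_le.mpr hm.2)
          rw [hTdef ω]
          exact le_antisymm (Nat.sInf_le hmem)
            (hlb _ (Nat.sInf_mem ⟨_, hmem⟩))
      rw [hset]
      exact (measurableSet_lt (hSmeas (t+1)) measurable_const).inter (hA t)
  -- conclusion
  refine ⟨(measurable_from_top.comp hTmeas).aestronglyMeasurable, ?_⟩
  have hTle : ∀ ω, (‖(T ω : ℝ)‖₊ : ENNReal) ≤ ∑' k, (A k).indicator (fun _ => (1:ENNReal)) ω := by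
    intro ω
    have h1 : (‖(T ω : ℝ)‖₊ : ENNReal) = (T ω : ENNReal) := by
      simp
    rw [h1]
    calc (T ω : ENNReal) = ∑ k ∈ Finset.range (T ω), (1:ENNReal) := by simp
      _ = ∑ k ∈ Finset.range (T ω), (A k).indicator (fun _ => (1:ENNReal)) ω := by
          refine Finset.sum_congr rfl fun k hk => ?_
          rw [Set.indicator_of_mem (hmemA ω k (Finset.mem_range.mp hk))]
      _ ≤ ∑' k, (A k).indicator (fun _ => (1:ENNReal)) ω := ENNReal.sum_le_tsum _
  have hfin : ∫⁻ ω, (‖(T ω : ℝ)‖₊ : ENNReal) ∂μ ≤ ∑' k, μ (A k) := by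
    calc ∫⁻ ω, (‖(T ω : ℝ)‖₊ : ENNReal) ∂μ
        ≤ ∫⁻ ω, ∑' k, (A k).indicator (fun _ => (1:ENNReal)) ω ∂μ := lintegral_mono hTle
      _ = ∑' k, ∫⁻ ω, (A k).indicator (fun _ => (1:ENNReal)) ω ∂μ :=
          lintegral_tsum fun k => (measurable_const.indicator (hA k)).aemeasurable
      _ = ∑' k, μ (A k) := tsum_congr fun k => lintegral_indicator_one (hA k)
  exact lt_of_le_of_lt (hfin.trans htsum) ENNReal.ofReal_lt_top
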